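/- arXiv:2412.07086 — 2 statements merged into one kernel-verified Lean document; each statement's English description precedes it below -/
import Mathlib

section
/- Let U be a type and B a pointed ω-complete partial order, and equip E = U → B with the pointwise order (so E is a pointed ωcpo with bottom λx.⊥ and pointwise ωSup). Let F, G : E → E be ω-continuous, let φ = ωSup of the chain k ↦ F^[k](⊥) and γ = ωSup of the chain k ↦ G^[k](⊥) (these are the least fixed points of F and G). Let R be an admissible relation on B, and let X ⊆ U. Define φ'₀ ∈ E by φ'₀(x) = φ(x) if x ∈ X and φ'₀(x) = ⊥ otherwise, and φ'ₖ = F^[k](φ'₀); define γ'₀ and γ'ₖ analogously from γ and G. Assume: (1) for all k ≥ 0 and all x ∈ U, R (φ'ₖ(x)) (γ'ₖ(x)); (2) for all x ∈ X, φ(x) ≤ φ'₁(x); (3) for all x ∈ X, γ(x) ≤ γ'₁(x). Then for all x ∈ U, R (φ(x)) (γ(x)). -/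
open OmegaCompletePartialOrder

/-- Auxiliary: ωSup of iterates from a seed `p` with `⊥ ≤ p ≤ F p` and `p ≤ φ`
equals `φ = ωSup (F^[k] ⊥)`. -/
theorem aux_ωSup_iter {E : Type*} [OmegaCompletePartialOrder E] [OrderBot E]
    (F : E → E) (hF : ωScottContinuous F) (cF : Chain E) (hcF : ∀ k, cF k = F^[k] ⊥)
    (φ : E) (hφ : φ = ωSup cF) (p : E) (hpF : p ≤ F p) (hpφ : p ≤ φ)
    (d : Chain E) (hd : ∀ k, d k = F^[k] p) : ωSup d = φ := by
  have hmono := hF.monotone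
  have hFφ : F φ ≤ φ := by
    have hc : ∀ c : Chain E, F (ωSup c) = ωSup (c.map ⟨F, hmono⟩) := hF.map_ωSup
    rw [hφ, show F (ωSup cF) = ωSup (cF.map ⟨F, hmono⟩) from hc cF]
    apply ωSup_le
    intro k
    have : F (cF k) = cF (k + 1) := by
      rw [hcF, hcF, Function.iterate_succ_apply']
    simp only [Chain.map_coe, OrderHom.coe_mk, Function.comp_apply]
    rw [this]
    exact le_ωSup cF (k + 1)
  have hupper : ∀ k, F^[k] p ≤ φ := by
    intro k
    induction k with
    | zero => simpa using hpφ
    | succ n ih =>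
      rw [Function.iterate_succ_apply']
      exact le_trans (hmono ih) hFφ
  apply le_antisymm
  · exact ωSup_le _ _ fun k => (hd k) ▸ hupper k
  · rw [hφ]
    apply ωSup_le
    intro k
    have : cF k ≤ d k := by
      rw [hcF, hd]
      exact Monotone.iterate hmono k bot_le
    exact le_trans this (le_ωSup d k)

theorem stmt_0 {U B : Type*} [OmegaCompletePartialOrder B] [OrderBot B]
    (F G : (U → B) → (U → B)) (hF : ωScottContinuous F) (hG : ωScottContinuous G)
    (cF cG : Chain (U → B))
    (hcF : ∀ k, cF k = F^[k] ⊥) (hcG : ∀ k, cG k = G^[k] ⊥)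
    (φ γ : U → B) (hφ : φ = ωSup cF) (hγ : γ = ωSup cG)
    (R : B → B → Prop)
    (hR : ∀ c c' : Chain B, (∀ k, R (c k) (c' k)) → R (ωSup c) (ωSup c'))
    (X : Set U) (φ'₀ γ'₀ : U → B)
    (hφ'₀X : ∀ x ∈ X, φ'₀ x = φ x) (hφ'₀out : ∀ x ∉ X, φ'₀ x = ⊥)
    (hγ'₀X : ∀ x ∈ X, γ'₀ x = γ x) (hγ'₀out : ∀ x ∉ X, γ'₀ x = ⊥)
    (h1 : ∀ (k : ℕ) (x : U), R (F^[k] φ'₀ x) (G^[k] γ'₀ x))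
    (h2 : ∀ x ∈ X, φ x ≤ F^[1] φ'₀ x)
    (h3 : ∀ x ∈ X, γ x ≤ G^[1] γ'₀ x) :
    ∀ x : U, R (φ x) (γ x) := by
  have hFm := hF.monotone
  have hGm := hG.monotone
  -- seeds satisfy p ≤ F p and p ≤ φ
  have hφ'F : φ'₀ ≤ F φ'₀ := by
    intro x
    by_cases hx : x ∈ X
    · rw [hφ'₀X x hx]
      simpa using h2 x hx
    · rw [hφ'₀out x hx]; exact bot_le
  have hγ'G : γ'₀ ≤ G γ'₀ := by
    intro x
    by_cases hx : x ∈ X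
    · rw [hγ'₀X x hx]
      simpa using h3 x hx
    · rw [hγ'₀out x hx]; exact bot_le
  have hφ'φ : φ'₀ ≤ φ := by
    intro x
    by_cases hx : x ∈ X
    · rw [hφ'₀X x hx]
    · rw [hφ'₀out x hx]; exact bot_le
  have hγ'γ : γ'₀ ≤ γ := by
    intro x
    by_cases hx : x ∈ X
    · rw [hγ'₀X x hx]
    · rw [hγ'₀out x hx]; exact bot_le
  -- the chains of iterates
  let d : Chain (U → B) :=
    ⟨fun k => F^[k] φ'₀, monotone_nat_of_le_succ fun k => by
      rw [Function.iterate_succ_apply]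
      exact Monotone.iterate hFm k hφ'F⟩
  let e : Chain (U → B) :=
    ⟨fun k => G^[k] γ'₀, monotone_nat_of_le_succ fun k => by
      rw [Function.iterate_succ_apply]
      exact Monotone.iterate hGm k hγ'G⟩
  have hdφ : ωSup d = φ := aux_ωSup_iter F hF cF hcF φ hφ φ'₀ hφ'F hφ'φ d (fun _ => rfl)
  have heγ : ωSup e = γ := aux_ωSup_iter G hG cG hcG γ hγ γ'₀ hγ'G hγ'γ e (fun _ => rfl)
  intro x
  have := hR (d.map (Pi.evalOrderHom x)) (e.map (Pi.evalOrderHom x)) (fun k => h1 k x)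
  have hdx : ωSup (d.map (Pi.evalOrderHom x)) = φ x := by
    rw [← hdφ]; rfl
  have hex : ωSup (e.map (Pi.evalOrderHom x)) = γ x := by
    rw [← heγ]; rfl
  rwa [hdx, hex] at this
end

section
/- Let U be a type, B a pointed ω-complete partial order, and E = U → B with the pointwise order. Let F : E → E be ω-continuous, φ = ωSup of the chain k ↦ F^[k](⊥), and X ⊆ U. Define φ'₀ ∈ E by φ'₀(x) = φ(x) if x ∈ X and φ'₀(x) = ⊥ otherwise. If for all x ∈ X one has φ(x) ≤ (F(φ'₀))(x), then the sequence k ↦ F^[k](φ'₀) is a chain and ωSup (k ↦ F^[k](φ'₀)) = φ. -/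
open OmegaCompletePartialOrder

theorem stmt_7 {U B : Type*} [OmegaCompletePartialOrder B] [OrderBot B]
    (F : (U → B) → (U → B)) (hF : ∃ hf : Monotone F, ∀ c : Chain (U → B), F (ωSup c) = ωSup (c.map ⟨F, hf⟩))
    (c₀ : Chain (U → B)) (hc₀ : ∀ k, c₀ k = F^[k] ⊥)
    (φ : U → B) (hφ : φ = ωSup c₀)
    (X : Set U) (φ'₀ : U → B)
    (hφ'₀X : ∀ x ∈ X, φ'₀ x = φ x) (hφ'₀out : ∀ x ∉ X, φ'₀ x = ⊥)
    (h : ∀ x ∈ X, φ x ≤ F φ'₀ x) :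
    Monotone (fun k : ℕ => F^[k] φ'₀) ∧
      ∀ c : Chain (U → B), (∀ k, c k = F^[k] φ'₀) → ωSup c = φ := by
  obtain ⟨mono, cont⟩ := hF
  -- φ is a fixed point of F
  have hfix : F φ = φ := by
    rw [hφ]
    have hc := cont c₀
    rw [hc]
    apply le_antisymm
    · apply ωSup_le
      intro k
      have : (c₀.map ⟨F, mono⟩) k = c₀ (k + 1) := by
        show F (c₀ k) = c₀ (k + 1)
        rw [hc₀, hc₀, Function.iterate_succ_apply']
      rw [this]
      exact le_ωSup c₀ (k + 1)
    · apply ωSup_le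
      intro k
      have : c₀ k ≤ (c₀.map ⟨F, mono⟩) k := by
        have h1 : (c₀.map ⟨F, mono⟩) k = c₀ (k + 1) := by
          show F (c₀ k) = c₀ (k + 1)
          rw [hc₀, hc₀, Function.iterate_succ_apply']
        rw [h1]
        exact c₀.monotone (Nat.le_succ k)
      exact le_trans this (le_ωSup _ k)
  have hle : φ'₀ ≤ φ := by
    intro x
    by_cases hx : x ∈ X
    · rw [hφ'₀X x hx]
    · rw [hφ'₀out x hx]; exact bot_le
  have hstep : φ'₀ ≤ F φ'₀ := by
    intro x
    by_cases hx : x ∈ X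
    · rw [hφ'₀X x hx]; exact h x hx
    · rw [hφ'₀out x hx]; exact bot_le
  have hmono : Monotone (fun k : ℕ => F^[k] φ'₀) := by
    apply monotone_nat_of_le_succ
    intro k
    rw [Function.iterate_succ_apply']
    induction k with
    | zero => exact hstep
    | succ n ih =>
        rw [Function.iterate_succ_apply']
        exact mono ih
  have hub : ∀ k, F^[k] φ'₀ ≤ φ := by
    intro k
    induction k with
    | zero => exact hle
    | succ n ih =>
        rw [Function.iterate_succ_apply']
        calc F (F^[n] φ'₀) ≤ F φ := mono ih
        _ = φ := hfix
  refine ⟨hmono, fun c hc => ?_⟩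
  apply le_antisymm
  · apply ωSup_le
    intro k
    rw [hc k]
    exact hub k
  · rw [hφ]
    apply ωSup_le
    intro k
    have : c₀ k ≤ c k := by
      rw [hc₀ k, hc k]
      exact mono.iterate k bot_le
    exact le_trans this (le_ωSup c k)
end
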